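/- Let K ⊆ 𝕂 be an extension of fields, M a K-vector space, and G a group acting on M by K-linear automorphisms, extended to M ⊗_K 𝕂 by 𝕂-linear automorphisms via g(m ⊗ c) = g(m) ⊗ c. If every finite-dimensional 𝕂-subspace of M ⊗_K 𝕂 is contained in a G-stable finite-dimensional 𝕂-subspace, then every finite-dimensional K-subspace of M is contained in a G-stable finite-dimensional K-subspace of M. -/
import Mathlib

open TensorProduct

/-- Descent of local finiteness along a field extension `K ⊆ 𝕂`: if a group `G` acts on a
`K`-vector space `M` by `K`-linear automorphisms, and every finite-dimensional `𝕂`-subspace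
of the base change `𝕂 ⊗[K] M` is contained in a `G`-stable finite-dimensional `𝕂`-subspace,
then every finite-dimensional `K`-subspace of `M` is contained in a `G`-stable
finite-dimensional `K`-subspace. -/
theorem locally_finite_of_locally_finite_baseChange
    (K 𝕂 : Type*) [Field K] [Field 𝕂] [Algebra K 𝕂]
    (M : Type*) [AddCommGroup M] [Module K M]
    (G : Type*) [Group G] (ρ : G →* (M ≃ₗ[K] M))
    (h : ∀ V : Submodule 𝕂 (𝕂 ⊗[K] M), FiniteDimensional 𝕂 V →
      ∃ W : Submodule 𝕂 (𝕂 ⊗[K] M), FiniteDimensional 𝕂 W ∧ V ≤ W ∧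
        ∀ g : G, ∀ w ∈ W, LinearMap.baseChange 𝕂 (ρ g : M →ₗ[K] M) w ∈ W) :
    ∀ V : Submodule K M, FiniteDimensional K V →
      ∃ W : Submodule K M, FiniteDimensional K W ∧ V ≤ W ∧
        ∀ g : G, ∀ w ∈ W, ρ g w ∈ W := by
  intro V hV
  -- the base change of `V` is finite dimensional
  have hVb : FiniteDimensional 𝕂 (V.baseChange 𝕂) := by
    obtain ⟨s, hs⟩ := Module.Finite.iff_fg.mp hV
    rw [← hs, Submodule.baseChange_span]
    exact FiniteDimensional.span_of_finite 𝕂 (s.finite_toSet.image _)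
  obtain ⟨W', hW'fin, hVW', hstab⟩ := h (V.baseChange 𝕂) hVb
  set ι : M →ₗ[K] 𝕂 ⊗[K] M := TensorProduct.mk K 𝕂 M 1 with hι
  refine ⟨(W'.restrictScalars K).comap ι, ?_, ?_, ?_⟩
  · -- finite dimensionality, via flatness of 𝕂 over K
    set W : Submodule K M := (W'.restrictScalars K).comap ι
    have hinj : Function.Injective (W.subtype.baseChange 𝕂) := by
      rw [LinearMap.baseChange_eq_ltensor]
      exact Module.Flat.lTensor_preserves_injective_linearMap _ W.injective_subtype
    have hrange : ∀ x : 𝕂 ⊗[K] ↥W, W.subtype.baseChange 𝕂 x ∈ W' := by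
      intro x
      induction x with
      | zero => simp
      | tmul c w =>
        rw [LinearMap.baseChange_tmul]
        have hw : (1 : 𝕂) ⊗ₜ[K] (w : M) ∈ W' := w.2
        have := W'.smul_mem c hw
        rwa [smul_tmul', smul_eq_mul, mul_one] at this
      | add x y hx hy => simpa using W'.add_mem hx hy
    have hle : Module.rank 𝕂 (𝕂 ⊗[K] ↥W) ≤ Module.rank 𝕂 ↥W' := by
      refine LinearMap.rank_le_of_injective
        ((W.subtype.baseChange 𝕂).codRestrict W' hrange) ?_
      intro x y hxy
      exact hinj (congrArg Subtype.val hxy)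
    have hlt : Module.rank 𝕂 (𝕂 ⊗[K] ↥W) < Cardinal.aleph0 :=
      hle.trans_lt (Module.rank_lt_aleph0 𝕂 ↥W')
    rw [Module.rank_baseChange] at hlt
    have : Module.rank K ↥W < Cardinal.aleph0 := by
      rwa [Cardinal.lift_lt_aleph0] at hlt
    exact Module.rank_lt_aleph0_iff.mp this
  · intro v hv
    exact hVW' (Submodule.tmul_mem_baseChange_of_mem 1 hv)
  · intro g w hw
    have := hstab g (ι w) hw
    rwa [hι, TensorProduct.mk_apply, LinearMap.baseChange_tmul] at this
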